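/- arXiv:1806.03603 — 3 statements merged into one kernel-verified Lean document; each statement's English description precedes it below -/
import Mathlib

section
/- Let F be a field of characteristic p > 0, let α ∈ F and β, γ ∈ F^× with γ ≠ 0, and set t = α + (α - β)/γ. Then in the symbol p-algebra [α,γ)_{p,F} = F⟨x,y : x^p - x = α, y^p = γ, yxy^{-1} = x+1⟩, the element z = x + t·y + x·y satisfies z^p - z = t^p·γ + β. In particular, [α,γ)_{p,F} contains the étale F-algebra F[z : z^p - z = t^p·γ + β]. -/
noncomputable section
namespace PaperSymbol

variable (F : Type) [Field F] (p : ℕ) (α γ : F)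

/-- The defining relations of the symbol `p`-algebra `[α,γ)_{p,F}`:
`x^p - x = α`, `y^p = γ` and `y x = (x+1) y` (i.e. `y x y⁻¹ = x + 1`). -/
inductive SymbolRel : FreeAlgebra F (Fin 2) → FreeAlgebra F (Fin 2) → Prop
  | relx : SymbolRel (FreeAlgebra.ι F (0 : Fin 2) ^ p - FreeAlgebra.ι F (0 : Fin 2))
      (algebraMap F _ α)
  | rely : SymbolRel (FreeAlgebra.ι F (1 : Fin 2) ^ p) (algebraMap F _ γ)
  | relcomm : SymbolRel (FreeAlgebra.ι F (1 : Fin 2) * FreeAlgebra.ι F (0 : Fin 2))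
      ((FreeAlgebra.ι F (0 : Fin 2) + 1) * FreeAlgebra.ι F (1 : Fin 2))

/-- The symbol `p`-algebra `[α,γ)_{p,F} = F⟨x,y : x^p - x = α, y^p = γ, yxy⁻¹ = x+1⟩`. -/
def SymbolAlgebra : Type := RingQuot (SymbolRel F p α γ)

instance : Ring (SymbolAlgebra F p α γ) := inferInstanceAs (Ring (RingQuot _))
instance : Algebra F (SymbolAlgebra F p α γ) := inferInstanceAs (Algebra F (RingQuot _))

/-- The generator `x` of the symbol algebra. -/
def xgen : SymbolAlgebra F p α γ :=
  RingQuot.mkAlgHom F (SymbolRel F p α γ) (FreeAlgebra.ι F (0 : Fin 2))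

/-- The generator `y` of the symbol algebra. -/
def ygen : SymbolAlgebra F p α γ :=
  RingQuot.mkAlgHom F (SymbolRel F p α γ) (FreeAlgebra.ι F (1 : Fin 2))

end PaperSymbol


namespace Statement0Aux

variable {A : Type*} [Ring A]

def hh (w : A) : ℕ → ℕ → A
  | 0, _ => 1
  | m+1, 0 => w ^ (m+1)
  | m+1, k+1 => hh w (m+1) k + (w + ((k:A)+1)) * hh w m (k+1)

@[simp] lemma hh_zero (w : A) (k : ℕ) : hh w 0 k = 1 := by cases k <;> simp [hh]

@[simp] lemma hh_base (w : A) (m : ℕ) : hh w (m+1) 0 = w ^ (m+1) := by simp [hh]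

@[simp] lemma hh_base' (w : A) (m : ℕ) : hh w m 0 = w ^ m := by
  cases m with
  | zero => simp
  | succ m => simp

lemma hh_succ (w : A) (m k : ℕ) :
    hh w (m+1) (k+1) = hh w (m+1) k + (w + ((k:A)+1)) * hh w m (k+1) := by rw [hh]

lemma commute_hh (w a : A) (h : Commute a w) (m k : ℕ) : Commute a (hh w m k) := by
  induction m generalizing k with
  | zero => simp
  | succ m ihm =>
    induction k with
    | zero => simpa using h.pow_right (m+1)
    | succ k ihk =>
      rw [hh_succ]
      exact ihk.add_right (((h.add_right ((Nat.cast_commute k a).symm.add_right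
        (Commute.one_right a)))).mul_right (ihm (k+1)))

lemma hh_one (w : A) (m : ℕ) : hh w m 1 = (w+1)^(m+1) - w^(m+1) := by
  induction m with
  | zero => simp
  | succ m ih =>
    rw [hh_succ, ih, hh_base]
    have : ((0:ℕ):A) + 1 = 1 := by norm_num
    rw [this]
    have h1 : (w+1) * ((w + 1) ^ (m + 1) - w ^ (m + 1))
        = (w+1)^(m+2) - (w+1) * w^(m+1) := by
      rw [mul_sub, ← pow_succ']
    rw [h1, add_mul, one_mul, ← pow_succ']
    ring_nf
    abel

lemma hh_shift (w : A) (k m : ℕ) :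
    hh (w+1) (m+1) k = hh w (m+1) k + ((k:A)+1) * hh w m (k+1) := by
  induction k generalizing m with
  | zero =>
    simp [hh_one]
  | succ k ihk =>
    have hcw : Commute ((k:A)+1+1) w :=
      ((Nat.cast_commute k w).add_left (Commute.one_left w)).add_left (Commute.one_left w)
    induction m with
    | zero =>
      rw [hh_succ, ihk 0, hh_succ, hh_zero, hh_zero, hh_zero]
      push_cast
      noncomm_ring
    | succ m ihm =>
      rw [hh_succ, ihk (m+1), ihm, hh_succ w (m+1) k, hh_succ w m (k+1)]
      push_cast
      have hsw : ((k:A)+1+1) * ((w + ((k:A)+1+1)) * hh w m (k+1+1))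
          = (w + ((k:A)+1+1)) * (((k:A)+1+1) * hh w m (k+1+1)) :=
        (hcw.add_right (Commute.refl _)).left_comm _
      rw [mul_add ((k:A)+1+1) (hh w (m+1) (k+1)), hsw]
      noncomm_ring


section CharP
variable (p : ℕ) [hp : Fact p.Prime] [CharP A p]

lemma hh_top_one (w : A) : hh w (p-1) 1 = 1 := by
  have h1 : p - 1 + 1 = p := Nat.succ_pred_eq_of_pos hp.out.pos
  rw [hh_one, h1, add_pow_char_of_commute p (Commute.one_right w)]
  simp

lemma cast_cancel (k : ℕ) (hk : ¬ p ∣ k) (a : A) (h : (k:A) * a = 0) : a = 0 := by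
  haveI : NeZero p := ⟨hp.out.ne_zero⟩
  have h1 : ((k : ZMod p))^(p-1) = 1 :=
    ZMod.pow_card_sub_one_eq_one (by
      simpa [ZMod.natCast_eq_zero_iff] using hk)
  have h2 : ((k:A))^(p-1) = 1 := by
    have := congrArg (ZMod.castHom (dvd_refl p) A) h1
    simpa using this
  have hp2 : p - 2 + 1 = p - 1 := by have := hp.out.two_le; omega
  calc a = ((k:A)^(p-1)) * a := by rw [h2, one_mul]
    _ = (k:A)^(p-2) * ((k:A) * a) := by rw [← mul_assoc, ← pow_succ, hp2]
    _ = 0 := by rw [h, mul_zero]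

lemma hh_mid : ∀ k, 2 ≤ k → k ≤ p - 1 → ∀ w : A, hh w (p-k) k = 0 := by
  have hple := hp.out.two_le
  intro k hk2
  induction k, hk2 using Nat.le_induction with
  | base =>
    intro hkp w
    have hp3 : 3 ≤ p := by omega
    have hs := hh_shift w 1 (p-2)
    rw [show p - 2 + 1 = p - 1 by omega] at hs
    rw [hh_top_one, hh_top_one] at hs
    norm_num at hs
    exact cast_cancel p 2 (fun hdvd =>
      absurd (Nat.le_of_dvd (by norm_num) hdvd) (by omega)) _ (by push_cast; exact hs)
  | succ k hk ih =>
    intro hkp w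
    have hkp' : k ≤ p - 1 := by omega
    have hs := hh_shift w k (p-k-1)
    rw [show p - k - 1 + 1 = p - k by omega] at hs
    rw [ih hkp' w, ih hkp' (w+1)] at hs
    have h0 : (((k+1:ℕ)):A) * hh w (p-k-1) (k+1) = 0 := by
      push_cast
      simpa using hs.symm
    have := cast_cancel p (k+1) (fun hdvd => by
      have := Nat.le_of_dvd (by omega) hdvd; omega) _ h0
    rw [show p - (k+1) = p - k - 1 by omega]
    exact this

end CharP

lemma vpow_X (X v : A) (h : v * X = (X+1) * v) : ∀ n : ℕ, v^n * X = (X + (n:A)) * v^n := by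
  intro n
  induction n with
  | zero => simp
  | succ n ih =>
    rw [pow_succ, mul_assoc, h, ← mul_assoc, mul_add, mul_one, ih]
    push_cast
    noncomm_ring

lemma pow_expand (X v : A) (h : v * X = (X+1)*v) (n : ℕ) :
    (X + v)^n = ∑ k ∈ Finset.range (n+1), hh X (n-k) k * v^k := by
  induction n with
  | zero => simp
  | succ n ih =>
    rw [pow_succ, ih, Finset.sum_mul]
    have hterm : ∀ k, (hh X (n-k) k * v^k) * (X + v)
        = hh X (n-k) k * (X + (k:A)) * v^k + hh X (n-k) k * v^(k+1) := by
      intro k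
      rw [mul_add]
      congr 1
      · rw [mul_assoc, vpow_X X v h k, ← mul_assoc]
      · rw [mul_assoc, ← pow_succ]
    rw [Finset.sum_congr rfl fun k _ => hterm k, Finset.sum_add_distrib]
    rw [Finset.sum_range_succ' (fun k => hh X (n-k) k * (X + (k:A)) * v^k) n]
    rw [Finset.sum_range_succ (fun k => hh X (n-k) k * v^(k+1)) n]
    rw [Finset.sum_range_succ' (fun k => hh X (n+1-k) k * v^k) (n+1)]
    rw [Finset.sum_range_succ (fun k => hh X (n+1-(k+1)) (k+1) * v^(k+1)) n]
    have e0 : hh X (n - 0) 0 * (X + ((0:ℕ):A)) * v^0 = hh X (n+1-0) 0 * v^0 := by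
      simp [pow_succ]
    have etop : hh X (n-n) n * v^(n+1) = hh X (n+1-(n+1)) (n+1) * v^(n+1) := by
      simp
    have emid : ∀ k ∈ Finset.range n,
        hh X (n-(k+1)) (k+1) * (X + ((k+1:ℕ):A)) * v^(k+1) + hh X (n-k) k * v^(k+1)
          = hh X (n+1-(k+1)) (k+1) * v^(k+1) := by
      intro k hk
      rw [Finset.mem_range] at hk
      obtain ⟨j, hj⟩ : ∃ j, n - k = j + 1 := ⟨n - k - 1, by omega⟩
      have h1 : n + 1 - (k+1) = j + 1 := by omega
      have h2 : n - (k+1) = j := by omega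
      rw [h1, h2, hj, hh_succ]
      have hcomm : Commute (X + ((k:A)+1)) (hh X j (k+1)) :=
        commute_hh X _ ((Commute.refl X).add_left
          ((Nat.cast_commute k X).add_left (Commute.one_left X))) _ _
      rw [add_mul, hcomm.eq]
      push_cast
      noncomm_ring
    rw [Finset.sum_congr rfl (fun k hk => (emid k hk).symm)]
    rw [e0, ← etop, Finset.sum_add_distrib]
    abel

lemma key (p : ℕ) [hp : Fact p.Prime] [CharP A p] (X v : A) (h : v * X = (X+1)*v) :
    (X + v)^p = X^p + v + v^p := by
  obtain ⟨q, hq⟩ : ∃ q, p = q + 2 := ⟨p - 2, by have := hp.out.two_le; omega⟩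
  subst hq
  rw [pow_expand X v h]
  rw [Finset.sum_range_succ' (fun k => hh X (q+2-k) k * v^k) (q+2)]
  rw [Finset.sum_range_succ' (fun k => hh X (q+2-(k+1)) (k+1) * v^(k+1)) (q+1)]
  rw [Finset.sum_range_succ (fun k => hh X (q+2-(k+1+1)) (k+1+1) * v^(k+1+1)) q]
  have hmid : ∀ k ∈ Finset.range q, hh X (q+2-(k+1+1)) (k+1+1) * v^(k+1+1) = 0 := by
    intro k hk
    rw [Finset.mem_range] at hk
    rw [hh_mid (q+2) (k+2) (by omega) (by omega) X]
    simp
  rw [Finset.sum_congr rfl hmid, Finset.sum_const_zero]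
  have h1 : hh X (q+2-(0+1)) (0+1) = 1 := by
    have := hh_top_one (A := A) (q+2) X
    simpa using this
  have h2 : hh X (q+2-(q+1+1)) (q+1+1) = 1 := by simp
  have h0 : hh X (q+2-0) 0 * v^0 = X^(q+2) := by simp
  rw [h1, h2, h0]
  simp only [pow_one, one_mul, zero_add]
  abel

end Statement0Aux


open Polynomial in
lemma prod_range_X_add_C (F : Type) [Field F] (p : ℕ) [hp : Fact p.Prime] [CharP F p] :
    (∏ j ∈ Finset.range p, (X + C ((j:ℕ):F))) = X^p - X := by
  haveI : NeZero p := ⟨hp.out.ne_zero⟩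
  have hcard : Fintype.card (ZMod p) = p := ZMod.card p
  have hdeg : (X^p - X : (ZMod p)[X]).natDegree = p :=
    FiniteField.X_pow_card_sub_X_natDegree_eq (ZMod p) hp.out.one_lt
  have hmonic : (X^p - X : (ZMod p)[X]).Monic :=
    Polynomial.monic_X_pow_sub (by simpa [Polynomial.degree_X] using
      (by exact_mod_cast hp.out.one_lt : (1:ℕ∞) < p))
  have hroots : (X^p - X : (ZMod p)[X]).roots = Finset.univ.val := by
    have := FiniteField.roots_X_pow_card_sub_X (ZMod p)
    rwa [hcard] at this
  have h1 : (∏ a : ZMod p, (X - C a)) = X^p - X := by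
    have h := Polynomial.prod_multiset_X_sub_C_of_monic_of_roots_card_eq hmonic
      (by rw [hroots, hdeg]; simpa using hcard)
    rw [hroots] at h
    exact h
  -- map to F
  let φ : ZMod p →+* F := ZMod.castHom (dvd_refl p) F
  have h2 : (∏ a : ZMod p, (X - C (φ a))) = (X^p - X : F[X]) := by
    have := congrArg (Polynomial.mapRingHom φ) h1
    simpa [map_prod, Polynomial.map_sub, Polynomial.map_pow] using this
  have h3 : (∏ a : ZMod p, (X + C (φ a))) = (X^p - X : F[X]) := by
    rw [← h2]
    exact Fintype.prod_equiv (Equiv.neg (ZMod p)) _ _ (fun a => by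
      simp [sub_neg_eq_add])
  rw [← h3]
  refine Finset.prod_nbij' (fun j => ((j:ℕ) : ZMod p)) (fun a => a.val) ?_ ?_ ?_ ?_ ?_
  · intro a _; exact Finset.mem_univ _
  · intro a _; exact Finset.mem_range.mpr (ZMod.val_lt a)
  · intro a ha; exact ZMod.val_cast_of_lt (Finset.mem_range.mp ha)
  · intro a _; exact ZMod.natCast_rightInverse a
  · intro j hj
    simp [φ, ZMod.castHom_apply, ZMod.natCast_val]

open PaperSymbol in
/-- Lemma 3.1. Let `F` be a field of characteristic `p > 0`,
`α ∈ F`, `β, γ ∈ F^×`, and `t = α + (α - β)/γ`.  In the symbol `p`-algebra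
`[α,γ)_{p,F}` the element `z = x + t·y + x·y` satisfies `z^p - z = t^p·γ + β`;
in particular `[α,γ)_{p,F}` contains the étale extension
`F[z : z^p - z = t^pγ + β]` of `F`. -/
theorem statement0 (F : Type) [Field F] (p : ℕ) [Fact p.Prime] [CharP F p]
    (α β γ : F) (hβ : β ≠ 0) (hγ : γ ≠ 0) (t : F) (ht : t = α + (α - β) / γ) :
    ((xgen F p α γ + algebraMap F _ t * ygen F p α γ + xgen F p α γ * ygen F p α γ) ^ p -
        (xgen F p α γ + algebraMap F _ t * ygen F p α γ + xgen F p α γ * ygen F p α γ) =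
      algebraMap F _ (t ^ p * γ + β)) ∧
      ∃ z : SymbolAlgebra F p α γ, z ^ p - z = algebraMap F _ (t ^ p * γ + β) := by
  classical
  set A := SymbolAlgebra F p α γ with hA
  have hX : (xgen F p α γ)^p - xgen F p α γ = algebraMap F A α := by
    have h := RingQuot.mkAlgHom_rel F (SymbolRel.relx (F:=F) (p:=p) (α:=α) (γ:=γ))
    simp only [map_sub, map_pow, AlgHom.commutes] at h; exact h
  have hYp : (ygen F p α γ)^p = algebraMap F A γ := by
    have h := RingQuot.mkAlgHom_rel F (SymbolRel.rely (F:=F) (p:=p) (α:=α) (γ:=γ))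
    simp only [map_pow, AlgHom.commutes] at h; exact h
  have hYX : ygen F p α γ * xgen F p α γ = (xgen F p α γ + 1) * ygen F p α γ := by
    have h := RingQuot.mkAlgHom_rel F (SymbolRel.relcomm (F:=F) (p:=p) (α:=α) (γ:=γ))
    simp only [map_mul, map_add, map_one] at h; exact h
  set X := xgen F p α γ with hXdef
  set Y := ygen F p α γ with hYdef
  by_cases htriv : (1 : A) = 0
  · haveI : Subsingleton A := subsingleton_of_zero_eq_one htriv.symm
    exact ⟨Subsingleton.elim _ _, ⟨0, Subsingleton.elim _ _⟩⟩
  · haveI : Nontrivial A := ⟨⟨1, 0, htriv⟩⟩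
    haveI : CharP A p := charP_of_injective_algebraMap' (A := A) F p
    set c : A := algebraMap F A t with hc
    set v : A := (X + c) * Y with hv
    have hcX : Commute c X := Algebra.commutes t X
    have hvX : v * X = (X + 1) * v := by
      rw [hv, mul_assoc, hYX, ← mul_assoc, ← mul_assoc]
      congr 1
      exact (((Commute.refl X).add_left hcX).add_right
        (Commute.one_right (X + c))).eq
    have hYnX := Statement0Aux.vpow_X X Y hYX
    have hvp : ∀ n : ℕ, v ^ n =
        Polynomial.aeval (X + c)
          (∏ j ∈ Finset.range n, (Polynomial.X + Polynomial.C ((j:ℕ):F))) * Y ^ n := by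
      intro n
      induction n with
      | zero => simp
      | succ n ih =>
        rw [pow_succ, ih, Finset.prod_range_succ, map_mul]
        have hYc : Y ^ n * c = c * Y ^ n := (Algebra.commutes t (Y ^ n)).symm
        have hstep : Y ^ n * (X + c) = (X + c + (n:A)) * Y ^ n := by
          rw [mul_add, hYnX n, hYc]
          noncomm_ring
        have haev : Polynomial.aeval (X + c) (Polynomial.X + Polynomial.C ((n:ℕ):F))
            = X + c + (n:A) := by
          simp [map_natCast]
        rw [haev, hv]
        calc Polynomial.aeval (X + c)
              (∏ j ∈ Finset.range n, (Polynomial.X + Polynomial.C ((j:ℕ):F))) * Y ^ n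
                * ((X + c) * Y)
            = Polynomial.aeval (X + c)
              (∏ j ∈ Finset.range n, (Polynomial.X + Polynomial.C ((j:ℕ):F)))
                * ((Y ^ n * (X + c)) * Y) := by noncomm_ring
          _ = Polynomial.aeval (X + c)
              (∏ j ∈ Finset.range n, (Polynomial.X + Polynomial.C ((j:ℕ):F)))
                * (((X + c + (n:A)) * Y ^ n) * Y) := by rw [hstep]
          _ = Polynomial.aeval (X + c)
              (∏ j ∈ Finset.range n, (Polynomial.X + Polynomial.C ((j:ℕ):F)))
                * (X + c + (n:A)) * Y ^ (n+1) := by rw [pow_succ]; noncomm_ring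
    have hvp2 : v ^ p = algebraMap F A ((α + (t^p - t)) * γ) := by
      rw [hvp p, prod_range_X_add_C F p]
      have h1 : Polynomial.aeval (X + c) ((Polynomial.X : Polynomial F) ^ p - Polynomial.X)
          = (X + c)^p - (X + c) := by simp
      have h2 : (X + c)^p = X^p + c^p := add_pow_char_of_commute p hcX.symm
      rw [h1, h2, hYp]
      have h3 : X^p + c^p - (X + c) = algebraMap F A (α + (t^p - t)) := by
        have h4 : X^p + c^p - (X + c) = (X^p - X) + (c^p - c) := by abel
        rw [h4, hX, hc, ← map_pow, ← map_sub, ← map_add]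
      rw [h3, ← map_mul]
    have hkey := Statement0Aux.key p X v hvX
    have hz : X + c * Y + X * Y = X + v := by rw [hv]; noncomm_ring
    have hfield : α + (α + (t^p - t)) * γ = t^p * γ + β := by
      subst ht
      field_simp
      ring
    have hmain : (X + c * Y + X * Y) ^ p - (X + c * Y + X * Y)
        = algebraMap F A (t ^ p * γ + β) := by
      rw [hz, hkey]
      have h5 : X^p + v + v^p - (X + v) = (X^p - X) + v^p := by abel
      rw [h5, hX, hvp2, ← map_add, hfield]
    exact ⟨hmain, ⟨X + c * Y + X * Y, hmain⟩⟩
end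
end

section
/- Let F be a field of characteristic p > 0 and let α, β, γ ∈ F^× with t = α + (α-β)/γ. If t^p·γ + β ≠ 0, then in the group H_p^2(F) (the cokernel of the Artin–Schreier map ℘ : Ω_F^1 → Ω_F^1/dΩ_F^0), the identity α·(dβ/β) ∧ (dγ/γ) = α·(d(βγ^{-1})/(βγ^{-1})) ∧ (d(t^pγ+β)/(t^pγ+β)) holds, where ∧ here denotes the class of the 2-form α·(dβ/β)∧(dγ/γ) in H_p^2(F). -/
noncomputable section
namespace PaperKM

variable (p : ℕ) (F : Type) [Field F] [CharP F p] [Algebra (ZMod p) F]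

/-- The pure wedge `v₁ ∧ … ∧ vₙ` as an element of the `n`-th exterior power. -/
def wedgeN {R M : Type} [CommRing R] [AddCommGroup M] [Module R M] {n : ℕ}
    (v : Fin n → M) : ⋀[R]^n M :=
  ⟨ExteriorAlgebra.ιMulti R n v, ExteriorAlgebra.ιMulti_range R n (Set.mem_range_self v)⟩

/-- Wedging an element of the `n`-th exterior power with a single vector. -/
def wedge1 {R M : Type} [CommRing R] [AddCommGroup M] [Module R M] {n : ℕ}
    (x : ⋀[R]^n M) (m : M) : ⋀[R]^(n + 1) M :=
  ⟨x.1 * ExteriorAlgebra.ι R m, by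
    have h := Submodule.mul_mem_mul x.2
      (LinearMap.mem_range_self (ExteriorAlgebra.ι R : M →ₗ[R] ExteriorAlgebra R M) m)
    rw [← pow_succ] at h
    exact h⟩

/-- The logarithmic differential `db/b ∈ Ω¹_F`. -/
def dlog (b : F) : Ω[F⁄ZMod p] := b⁻¹ • (KaehlerDifferential.D (ZMod p) F) b

/-- The subgroup of `Ω^n_F` generated by exact forms `da₀ ∧ da₁ ∧ … ∧ da_{n-1}`
(i.e. `dΩ^{n-1}`) together with the image of the Artin–Schreier map
`℘(a · dlog b₁ ∧ … ∧ dlog bₙ) = (a^p - a) · dlog b₁ ∧ … ∧ dlog bₙ`. -/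
def Rel (n : ℕ) : AddSubgroup (⋀[F]^n (Ω[F⁄ZMod p])) :=
  AddSubgroup.closure
    ({x | ∃ a : Fin n → F, x = wedgeN fun i => (KaehlerDifferential.D (ZMod p) F) (a i)} ∪
      {x | ∃ (a : F) (b : Fin n → F), (∀ i, b i ≠ 0) ∧
        x = (a ^ p - a) • wedgeN fun i => dlog p F (b i)})

/-- The Kato–Milne cohomology group `H_p^{n+1}(F)`, realised as the group of classes of
`n`-forms: the cokernel of `℘ : Ω^n → Ω^n/dΩ^{n-1}`. -/
def Hq (n : ℕ) : Type := (⋀[F]^n (Ω[F⁄ZMod p])) ⧸ Rel p F n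

instance (n : ℕ) : AddCommGroup (Hq p F n) :=
  inferInstanceAs (AddCommGroup (_ ⧸ Rel p F n))

/-- The class of an `n`-form in `H_p^{n+1}(F)`. -/
def Hmk {n : ℕ} : (⋀[F]^n (Ω[F⁄ZMod p])) →+ Hq p F n := QuotientAddGroup.mk' _

/-- The group `ν_F(n)`: the subgroup of `Ω^n` generated by the `n`-fold wedges of
logarithmic differentials `dlog b₁ ∧ … ∧ dlog bₙ`. -/
def nu (n : ℕ) : AddSubgroup (⋀[F]^n (Ω[F⁄ZMod p])) :=
  AddSubgroup.closure
    {x | ∃ b : Fin n → F, (∀ i, b i ≠ 0) ∧ x = wedgeN fun i => dlog p F (b i)}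

end PaperKM

open PaperKM in
/-- key identity in the proof of Proposition 3.2, cf.
Chapman–McKinnie, Lemma 5.1(e).  Let `F` be a field of characteristic `p > 0`,
`α, β, γ ∈ F^×` and `t = α + (α-β)/γ`.  If `t^pγ + β ≠ 0` then the classes of the
`2`-forms `α·(dβ/β) ∧ (dγ/γ)` and `α·(d(βγ⁻¹)/(βγ⁻¹)) ∧ (d(t^pγ+β)/(t^pγ+β))` agree in
the Kato–Milne cohomology group of classes of `2`-forms. -/
theorem statement1 (p : ℕ) [Fact p.Prime] (F : Type) [Field F] [CharP F p]
    [Algebra (ZMod p) F] (α β γ : F) (hα : α ≠ 0) (hβ : β ≠ 0) (hγ : γ ≠ 0)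
    (t : F) (ht : t = α + (α - β) / γ) (hne : t ^ p * γ + β ≠ 0) :
    Hmk p F (α • wedgeN ![dlog p F β, dlog p F γ]) =
      Hmk p F (α • wedgeN ![dlog p F (β * γ⁻¹), dlog p F (t ^ p * γ + β)]) := by
  apply congrArg
  apply Subtype.ext
  set D := KaehlerDifferential.D (ZMod p) F with hD
  set s : F := t ^ p * γ + β with hs
  have hDtp : D (t ^ p) = 0 := by
    rw [hD, Derivation.leibniz_pow]
    have h : ((p : ℕ) • (t ^ (p - 1) • (KaehlerDifferential.D (ZMod p) F) t))
        = (p : F) • (t ^ (p - 1) • (KaehlerDifferential.D (ZMod p) F) t) := by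
      rw [Nat.cast_smul_eq_nsmul F]
    rw [h, CharP.cast_eq_zero, zero_smul]
  have h1 : dlog p F (β * γ⁻¹) = β⁻¹ • D β - γ⁻¹ • D γ := by
    simp only [dlog, hD, Derivation.leibniz, Derivation.leibniz_inv]
    match_scalars
    · field_simp
    · field_simp
  have h2 : dlog p F s = s⁻¹ • (t ^ p • D γ + D β) := by
    simp only [dlog, hD]
    congr 1
    rw [map_add, Derivation.leibniz, hDtp, smul_zero, add_zero]
  have h3 : dlog p F β = β⁻¹ • D β := rfl
  have h4 : dlog p F γ = γ⁻¹ • D γ := rfl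
  rw [h1, h2, h3, h4]
  simp only [SetLike.val_smul, wedgeN, ExteriorAlgebra.ιMulti_apply, List.ofFn_succ,
    List.ofFn_zero, List.prod_cons, List.prod_nil, Matrix.cons_val_zero, Matrix.cons_val_one,
    Matrix.cons_val_succ, Matrix.head_cons, mul_one, map_smul, map_sub, map_add]
  set A := ExteriorAlgebra.ι F (D β) with hA
  set B := ExteriorAlgebra.ι F (D γ) with hB
  have hAA : A * A = 0 := ExteriorAlgebra.ι_sq_zero _
  have hBB : B * B = 0 := ExteriorAlgebra.ι_sq_zero _
  have hBA : B * A = -(A * B) := by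
    have h := ExteriorAlgebra.ι_add_mul_swap (R := F) (D β) (D γ)
    rw [← hA, ← hB] at h
    exact eq_neg_of_add_eq_zero_right h
  have hsne : s ≠ 0 := hne
  simp only [smul_mul_assoc, mul_smul_comm, sub_mul, mul_add, smul_sub, smul_add,
    smul_smul, hAA, hBB, hBA, smul_neg, smul_zero, mul_zero, zero_mul]
  match_scalars
  field_simp
  ring
end
end

section
/- Let F be a field of characteristic 2. Let θ be an anisotropic n-fold bilinear Pfister form over F and θ' an (n−1)-fold bilinear Pfister form factor of θ. Let β ∈ F^× be an element represented by the quadratic form Q(θ) but not by Q(θ'). Then Q(θ) is isometric to Q(⟨⟨β⟩⟩ ⊗ θ'). -/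
open QuadraticMap

noncomputable section
namespace PaperQF

variable (F : Type) [Field F]

/-- The binary quadratic form `[a,b] : (x,y) ↦ a·x² + x·y + b·y²`. -/
def binaryF (a b : F) : QuadraticForm F (Fin 2 → F) :=
  a • proj (R := F) (n := Fin 2) 0 0 + proj (R := F) (n := Fin 2) 0 1 +
    b • proj (R := F) (n := Fin 2) 1 1

/-- The hyperbolic plane `[0,0]`. -/
def hyp : QuadraticForm F (Fin 2 → F) := binaryF F 0 0

/-- An orthogonal sum of `m` hyperbolic planes. -/
def mHyp (m : ℕ) : QuadraticForm F (Fin m → Fin 2 → F) :=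
  QuadraticMap.pi fun _ => hyp F

variable {F}

/-- The diagonal coefficients of the bilinear Pfister form `⟨⟨a₁,…,aₙ⟩⟩`. -/
def pfC {n : ℕ} (a : Fin n → F) : (Fin n → Bool) → F :=
  fun s => ∏ i, if s i then a i else 1

/-- The tensor product of the diagonal bilinear form `⟨c₁,…⟩` with a quadratic form `Q`,
i.e. the orthogonal sum of the scaled copies `cᵢ • Q`. -/
def sumScaled {ι : Type} [Fintype ι] (c : ι → F) {M : Type} [AddCommGroup M] [Module F M]
    (Q : QuadraticForm F M) : QuadraticForm F (ι → M) :=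
  QuadraticMap.pi fun i => c i • Q

/-- The quadratic `(k+1)`-fold Pfister form `⟨⟨a₁,…,a_k, b]] = ⟨⟨a₁,…,a_k⟩⟩ ⊗ [1,b]`. -/
def qPf {k : ℕ} (a : Fin k → F) (b : F) :
    QuadraticForm F ((Fin k → Bool) → Fin 2 → F) :=
  sumScaled (pfC a) (binaryF F 1 b)

/-- Isometry of quadratic forms (possibly on different modules). -/
def Isom {M N : Type} [AddCommGroup M] [Module F M] [AddCommGroup N] [Module F N]
    (Q₁ : QuadraticForm F M) (Q₂ : QuadraticForm F N) : Prop :=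
  Nonempty (QuadraticMap.IsometryEquiv Q₁ Q₂)

/-- `ψ` is a (quadratic) factor of `φ`:  `φ ≅ ⟨⟨c⟩⟩ ⊗ ψ` for some bilinear Pfister form
`⟨⟨c₁,…,c_r⟩⟩` (with all slots nonzero). -/
def IsFactor {M N : Type} [AddCommGroup M] [Module F M] [AddCommGroup N] [Module F N]
    (ψ : QuadraticForm F M) (φ : QuadraticForm F N) : Prop :=
  ∃ (r : ℕ) (c : Fin r → F), (∀ i, c i ≠ 0) ∧ Isom φ (sumScaled (pfC c) ψ)

/-- The bilinear Pfister form `⟨⟨c⟩⟩` is a factor of `φ`:  `φ ≅ ⟨⟨c⟩⟩ ⊗ ψ` for some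
quadratic Pfister form `ψ`. -/
def IsBFactor {r : ℕ} {N : Type} [AddCommGroup N] [Module F N]
    (c : Fin r → F) (φ : QuadraticForm F N) : Prop :=
  ∃ (k : ℕ) (a : Fin k → F) (b : F), (∀ i, a i ≠ 0) ∧ Isom φ (sumScaled (pfC c) (qPf a b))

/-- `φ` and `π` have a common quadratic `j`-fold Pfister factor (for `j = 0` this is
interpreted as a trivial condition). -/
def HasCommonQPfFactor {M N : Type} [AddCommGroup M] [Module F M] [AddCommGroup N] [Module F N]
    (j : ℕ) (φ : QuadraticForm F M) (π : QuadraticForm F N) : Prop :=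
  match j with
  | 0 => True
  | k + 1 => ∃ (a : Fin k → F) (b : F), (∀ i, a i ≠ 0) ∧
      IsFactor (qPf a b) φ ∧ IsFactor (qPf a b) π

/-- The Witt index of a quadratic form: the largest number of hyperbolic planes that
split off. -/
def wittIndex {M : Type} [AddCommGroup M] [Module F M] (q : QuadraticForm F M) : ℕ :=
  sSup {m | ∃ (d : ℕ) (r : QuadraticForm F (Fin d → F)), Isom q ((mHyp F m).prod r)}

/-- A quadratic form is hyperbolic if it is an orthogonal sum of hyperbolic planes. -/
def IsHyp {M : Type} [AddCommGroup M] [Module F M] (q : QuadraticForm F M) : Prop :=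
  ∃ m : ℕ, Isom q (mHyp F m)

/-- Witt equivalence of quadratic forms. -/
def WittEquiv {M N : Type} [AddCommGroup M] [Module F M] [AddCommGroup N] [Module F N]
    (q₁ : QuadraticForm F M) (q₂ : QuadraticForm F N) : Prop :=
  ∃ m₁ m₂ : ℕ, Isom (q₁.prod (mHyp F m₁)) (q₂.prod (mHyp F m₂))

end PaperQF

namespace PaperQF
variable {F : Type} [Field F]

/-- The diagonal symmetric bilinear form with diagonal entries `w`. -/
def diagB {ι : Type} [Fintype ι] (w : ι → F) (x y : ι → F) : F := ∑ i, w i * x i * y i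

/-- Isometry of diagonal bilinear forms. -/
def DiagIsoB {ι κ : Type} [Fintype ι] [Fintype κ] (w : ι → F) (w' : κ → F) : Prop :=
  ∃ e : (ι → F) ≃ₗ[F] (κ → F), ∀ x y, diagB w' (e x) (e y) = diagB w x y

end PaperQF


namespace PaperAux
open PaperQF

variable {F : Type} [Field F]

lemma qws_apply' {ι : Type} [Fintype ι] (w v : ι → F) :
    QuadraticMap.weightedSumSquares F w v = ∑ i, w i * (v i * v i) := by
  rw [QuadraticMap.weightedSumSquares_apply]
  simp [smul_eq_mul]

section CharTwo
variable [CharP F 2]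

lemma qws_add {ι : Type} [Fintype ι] (w v₁ v₂ : ι → F) :
    QuadraticMap.weightedSumSquares F w (v₁ + v₂)
      = QuadraticMap.weightedSumSquares F w v₁ + QuadraticMap.weightedSumSquares F w v₂ := by
  simp only [qws_apply', ← Finset.sum_add_distrib]
  refine Finset.sum_congr rfl fun i _ => ?_
  have h2 : (2 : F) = 0 := CharTwo.two_eq_zero
  simp only [Pi.add_apply]
  linear_combination (w i * v₁ i * v₂ i) * h2

/-- `weightedSumSquares` as an additive monoid hom (char 2). -/
def qwsHom {ι : Type} [Fintype ι] (w : ι → F) : (ι → F) →+ F where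
  toFun v := QuadraticMap.weightedSumSquares F w v
  map_zero' := by simp [qws_apply']
  map_add' := qws_add w

@[simp] lemma qwsHom_apply {ι : Type} [Fintype ι] (w v : ι → F) :
    qwsHom w v = QuadraticMap.weightedSumSquares F w v := rfl

lemma qws_inj {ι : Type} [Fintype ι] (w : ι → F)
    (h : (QuadraticMap.weightedSumSquares F w).Anisotropic) :
    Function.Injective (QuadraticMap.weightedSumSquares F w) := by
  intro x y hxy
  have hx : x - y + y = x := sub_add_cancel x y
  have h0 : QuadraticMap.weightedSumSquares F w (x - y) = 0 := by
    have hh := qws_add w (x - y) y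
    rw [hx, hxy] at hh
    exact right_eq_add.mp hh
  exact sub_eq_zero.mp (h _ h0)

end CharTwo

lemma pfC_allFalse {n : ℕ} (a : Fin n → F) : pfC a (fun _ => false) = 1 := by
  simp [pfC]

lemma pfC_mul {n : ℕ} (a : Fin n → F) (s t : Fin n → Bool) :
    pfC a s * pfC a t
      = pfC a (fun i => (s i).xor (t i)) * (pfC a (fun i => s i && t i)) ^ 2 := by
  unfold pfC
  rw [← Finset.prod_mul_distrib, ← Finset.prod_pow, ← Finset.prod_mul_distrib]
  refine Finset.prod_congr rfl fun i _ => ?_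
  cases hs : s i <;> cases ht : t i <;> simp [hs, ht] <;> ring

lemma pfC_cons {k : ℕ} (γ : F) (e : Fin k → F) (s : Fin (k + 1) → Bool) :
    pfC (Fin.cons γ e) s = (if s 0 then γ else 1) * pfC e (fun i => s i.succ) := by
  unfold pfC
  rw [Fin.prod_univ_succ]
  simp [Fin.cons_zero, Fin.cons_succ]

lemma pfC_snoc {k : ℕ} (e : Fin k → F) (x : F) (s : Fin (k + 1) → Bool) :
    pfC (Fin.snoc e x) s
      = (if s (Fin.last k) then x else 1) * pfC e (fun i => s i.castSucc) := by
  unfold pfC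
  rw [Fin.prod_univ_castSucc]
  rw [mul_comm]
  simp [Fin.snoc_castSucc, Fin.snoc_last]

/-- "y is represented by the totally singular form with weights `w`". -/
def Rep {ι : Type} [Fintype ι] (w : ι → F) (y : F) : Prop :=
  ∃ v, QuadraticMap.weightedSumSquares F w v = y

lemma Rep_add {ι : Type} [Fintype ι] [CharP F 2] {w : ι → F} {y z : F}
    (hy : Rep w y) (hz : Rep w z) : Rep w (y + z) := by
  obtain ⟨v, rfl⟩ := hy; obtain ⟨v', rfl⟩ := hz
  exact ⟨v + v', qws_add w v v'⟩

lemma Rep_sq_mul {ι : Type} [Fintype ι] {w : ι → F} (a : F) {y : F}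
    (hy : Rep w y) : Rep w (a * a * y) := by
  obtain ⟨v, rfl⟩ := hy
  exact ⟨a • v, by rw [QuadraticMap.map_smul]; simp [smul_eq_mul]⟩

lemma Rep_single {ι : Type} [Fintype ι] [DecidableEq ι] (w : ι → F) (j : ι) :
    Rep w (w j) := by
  refine ⟨Pi.single j 1, ?_⟩
  rw [qws_apply', Finset.sum_eq_single j]
  · simp
  · intro b _ hb; simp [Pi.single_apply, hb]
  · intro h; exact absurd (Finset.mem_univ j) h

lemma Rep_one {k : ℕ} (e : Fin k → F) : Rep (pfC e) 1 := by
  have := Rep_single (pfC e) (fun _ => false)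
  rwa [pfC_allFalse] at this

lemma Rep_basis_mul {k : ℕ} (e : Fin k → F) (t : Fin k → Bool) {y : F}
    (hy : Rep (pfC e) y) : Rep (pfC e) (pfC e t * y) := by
  obtain ⟨v, rfl⟩ := hy
  have hinv : Function.Involutive (fun (m : Fin k → Bool) => fun i => (m i).xor (t i)) := by
    intro m; funext i; simp [Bool.xor_assoc]
  refine ⟨fun m => pfC e (fun i => ((m i).xor (t i)) && t i) * v (fun i => (m i).xor (t i)), ?_⟩
  rw [qws_apply', qws_apply', Finset.mul_sum]
  refine (Fintype.sum_equiv hinv.toPerm _ _ ?_).symm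
  intro s
  simp only [Function.Involutive.coe_toPerm]
  have hcan : (fun i => ((fun j => (s j).xor (t j)) i).xor (t i)) = s := by
    funext i; simp [Bool.xor_assoc]
  have hand : (fun i => (((fun j => (s j).xor (t j)) i).xor (t i)) && t i)
      = fun i => s i && t i := by
    funext i; simp [Bool.xor_assoc]
  rw [hcan, hand]
  linear_combination (v s * v s) * pfC_mul e s t

lemma Rep_mul {k : ℕ} [CharP F 2] (e : Fin k → F) {y z : F}
    (hy : Rep (pfC e) y) (hz : Rep (pfC e) z) : Rep (pfC e) (y * z) := by
  obtain ⟨w, rfl⟩ := hz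
  choose zz hzz using fun t => Rep_basis_mul e t hy
  refine ⟨∑ t, w t • zz t, ?_⟩
  rw [show QuadraticMap.weightedSumSquares F (pfC e) (∑ t, w t • zz t)
      = qwsHom (pfC e) (∑ t, w t • zz t) from rfl, map_sum]
  simp only [qwsHom_apply, QuadraticMap.map_smul, smul_eq_mul, hzz]
  rw [qws_apply', Finset.mul_sum]
  refine Finset.sum_congr rfl fun t _ => ?_
  ring

lemma Rep_inv {k : ℕ} (e : Fin k → F) {r : F} (hr : Rep (pfC e) r) (hr0 : r ≠ 0) :
    Rep (pfC e) r⁻¹ := by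
  have h1 := Rep_sq_mul r⁻¹ hr
  have h : r⁻¹ * r⁻¹ * r = r⁻¹ := by field_simp
  rwa [h] at h1


lemma pfC_cons_false {k : ℕ} (γ : F) (e : Fin k → F) (t : Fin k → Bool) :
    pfC (Fin.cons γ e) (Fin.cons false t) = pfC e t := by
  rw [pfC_cons]; simp

lemma pfC_cons_true {k : ℕ} (γ : F) (e : Fin k → F) (t : Fin k → Bool) :
    pfC (Fin.cons γ e) (Fin.cons true t) = γ * pfC e t := by
  rw [pfC_cons]; simp

lemma pfC_snoc_false {k : ℕ} (e : Fin k → F) (x : F) (t : Fin k → Bool) :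
    pfC (Fin.snoc e x) (Fin.snoc t false) = pfC e t := by
  rw [pfC_snoc]; simp

lemma pfC_snoc_true {k : ℕ} (e : Fin k → F) (x : F) (t : Fin k → Bool) :
    pfC (Fin.snoc e x) (Fin.snoc t true) = x * pfC e t := by
  rw [pfC_snoc]; simp

lemma qws_cons_split {k : ℕ} (γ : F) (e : Fin k → F) (v : (Fin (k + 1) → Bool) → F) :
    QuadraticMap.weightedSumSquares F (pfC (Fin.cons γ e)) v
      = QuadraticMap.weightedSumSquares F (pfC e) (fun t => v (Fin.cons false t))
        + γ * QuadraticMap.weightedSumSquares F (pfC e) (fun t => v (Fin.cons true t)) := by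
  simp only [qws_apply']
  rw [← Fintype.sum_equiv (Fin.consEquiv (fun _ : Fin (k + 1) => Bool))
      (fun p => pfC (Fin.cons γ e) (Fin.cons p.1 p.2)
        * (v (Fin.cons p.1 p.2) * v (Fin.cons p.1 p.2)))
      (fun s => pfC (Fin.cons γ e) s * (v s * v s)) (fun p => rfl)]
  rw [Fintype.sum_prod_type, Fintype.sum_bool]
  simp only [pfC_cons_true, pfC_cons_false]
  rw [Finset.mul_sum, add_comm]
  congr 1
  refine Finset.sum_congr rfl fun t _ => ?_
  ring

/-- The snoc analogue of `Fin.consEquiv`. -/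
def snocEquiv (k : ℕ) : Bool × (Fin k → Bool) ≃ (Fin (k + 1) → Bool) where
  toFun p := Fin.snoc p.2 p.1
  invFun s := (s (Fin.last k), fun i => s i.castSucc)
  left_inv p := by
    refine Prod.ext ?_ ?_
    · simp [Fin.snoc_last]
    · funext i; simp [Fin.snoc_castSucc]
  right_inv s := by
    funext i
    refine Fin.lastCases ?_ ?_ i
    · simp [Fin.snoc_last]
    · intro j; simp [Fin.snoc_castSucc]

lemma qws_snoc_split {k : ℕ} (e : Fin k → F) (x : F) (v : (Fin (k + 1) → Bool) → F) :
    QuadraticMap.weightedSumSquares F (pfC (Fin.snoc e x)) v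
      = QuadraticMap.weightedSumSquares F (pfC e) (fun t => v (Fin.snoc t false))
        + x * QuadraticMap.weightedSumSquares F (pfC e) (fun t => v (Fin.snoc t true)) := by
  simp only [qws_apply']
  rw [← Fintype.sum_equiv (snocEquiv k)
      (fun p => pfC (Fin.snoc e x) (Fin.snoc p.2 p.1)
        * (v (Fin.snoc p.2 p.1) * v (Fin.snoc p.2 p.1)))
      (fun s => pfC (Fin.snoc e x) s * (v s * v s)) (fun p => rfl)]
  rw [Fintype.sum_prod_type, Fintype.sum_bool]
  simp only [pfC_snoc_true, pfC_snoc_false]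
  rw [Finset.mul_sum, add_comm]
  congr 1
  refine Finset.sum_congr rfl fun t _ => ?_
  ring

lemma rep_cons_iff {k : ℕ} (γ : F) (e : Fin k → F) (y : F) :
    Rep (pfC (Fin.cons γ e)) y
      ↔ ∃ p r, Rep (pfC e) p ∧ Rep (pfC e) r ∧ y = p + γ * r := by
  constructor
  · rintro ⟨v, rfl⟩
    exact ⟨_, _, ⟨_, rfl⟩, ⟨_, rfl⟩, qws_cons_split γ e v⟩
  · rintro ⟨p, r, ⟨v₁, rfl⟩, ⟨v₂, rfl⟩, rfl⟩
    refine ⟨fun s => if s 0 then v₂ (fun i => s i.succ) else v₁ (fun i => s i.succ), ?_⟩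
    rw [qws_cons_split γ e]
    simp [Fin.cons_zero, Fin.cons_succ]

lemma rep_snoc_iff {k : ℕ} (e : Fin k → F) (x : F) (y : F) :
    Rep (pfC (Fin.snoc e x)) y
      ↔ ∃ p r, Rep (pfC e) p ∧ Rep (pfC e) r ∧ y = p + x * r := by
  constructor
  · rintro ⟨v, rfl⟩
    exact ⟨_, _, ⟨_, rfl⟩, ⟨_, rfl⟩, qws_snoc_split e x v⟩
  · rintro ⟨p, r, ⟨v₁, rfl⟩, ⟨v₂, rfl⟩, rfl⟩
    refine ⟨fun s => if s (Fin.last k) then v₂ (fun i => s i.castSucc)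
      else v₁ (fun i => s i.castSucc), ?_⟩
    rw [qws_snoc_split e x]
    simp [Fin.snoc_last, Fin.snoc_castSucc]

lemma diagB_self {ι : Type} [Fintype ι] (w : ι → F) (v : ι → F) :
    diagB w v v = QuadraticMap.weightedSumSquares F w v := by
  rw [qws_apply']
  unfold diagB
  exact Finset.sum_congr rfl fun i _ => by ring

end PaperAux

open PaperQF in
/-- Lemma 4.4. `char F = 2`.  Let `θ = ⟨⟨c₁,…,c_{k+1}⟩⟩` be an anisotropic
`(k+1)`-fold bilinear Pfister form and `θ' = ⟨⟨e₁,…,e_k⟩⟩` a `k`-fold bilinear Pfister factor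
of `θ`.  If `β ∈ F^×` is represented by `Q(θ)` but not by `Q(θ')`, then
`Q(θ) ≅ Q(⟨⟨β⟩⟩ ⊗ θ')`. -/
theorem statement5 (F : Type) [Field F] [CharP F 2] (k : ℕ)
    (c : Fin (k + 1) → F) (hc : ∀ i, c i ≠ 0)
    (hθaniso : (QuadraticMap.weightedSumSquares F (pfC c)).Anisotropic)
    (e : Fin k → F) (he : ∀ i, e i ≠ 0)
    (hfac : ∃ x : F, x ≠ 0 ∧ DiagIsoB (pfC (Fin.snoc e x)) (pfC c))
    (β : F) (hβ : β ≠ 0)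
    (hrep : ∃ v, QuadraticMap.weightedSumSquares F (pfC c) v = β)
    (hnrep : ¬ ∃ v, QuadraticMap.weightedSumSquares F (pfC e) v = β) :
    Isom (QuadraticMap.weightedSumSquares F (pfC c))
      (QuadraticMap.weightedSumSquares F (pfC (Fin.cons β e))) := by
    classical
  obtain ⟨x₀, hx₀0, E, hE⟩ := hfac
  have h2 : (2 : F) = 0 := CharTwo.two_eq_zero
  -- value sets of Q(θ) and Q(⟨⟨e,x₀⟩⟩) agree
  have hcs : ∀ y : F, PaperAux.Rep (pfC c) y ↔ PaperAux.Rep (pfC (Fin.snoc e x₀)) y := by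
    intro y
    constructor
    · rintro ⟨v, rfl⟩
      refine ⟨E.symm v, ?_⟩
      have h := hE (E.symm v) (E.symm v)
      rw [LinearEquiv.apply_symm_apply, PaperAux.diagB_self, PaperAux.diagB_self] at h
      exact h.symm
    · rintro ⟨v, rfl⟩
      refine ⟨E v, ?_⟩
      have h := hE v v
      rw [PaperAux.diagB_self, PaperAux.diagB_self] at h
      exact h
  -- decompose β = p + x₀ * r with p, r represented by Q(θ')
  have hβsnoc : PaperAux.Rep (pfC (Fin.snoc e x₀)) β := (hcs β).mp hrep
  rw [PaperAux.rep_snoc_iff] at hβsnoc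
  obtain ⟨p, r, hp, hr, hβeq⟩ := hβsnoc
  have hr0 : r ≠ 0 := by
    rintro rfl
    apply hnrep
    rw [mul_zero, add_zero] at hβeq
    obtain ⟨v, hv⟩ := hp
    exact ⟨v, by rw [hv, hβeq]⟩
  have hx₀r : x₀ * r = β - p := by rw [hβeq]; ring
  have hx₀eq : x₀ = (β - p) * r⁻¹ := by rw [← hx₀r]; field_simp
  -- value sets of Q(⟨⟨β,e⟩⟩) and Q(θ) agree
  have key : ∀ y : F, PaperAux.Rep (pfC (Fin.cons β e)) y ↔ PaperAux.Rep (pfC c) y := by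
    intro y
    rw [PaperAux.rep_cons_iff, hcs, PaperAux.rep_snoc_iff]
    constructor
    · rintro ⟨p', r', hp', hr', rfl⟩
      refine ⟨p' + p * r', r * r', PaperAux.Rep_add hp' (PaperAux.Rep_mul e hp hr'),
        PaperAux.Rep_mul e hr hr', ?_⟩
      linear_combination r' * hβeq
    · rintro ⟨p', r', hp', hr', rfl⟩
      refine ⟨p' + p * (r⁻¹ * r'), r⁻¹ * r',
        PaperAux.Rep_add hp'
          (PaperAux.Rep_mul e hp (PaperAux.Rep_mul e (PaperAux.Rep_inv e hr hr0) hr')),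
        PaperAux.Rep_mul e (PaperAux.Rep_inv e hr hr0) hr', ?_⟩
      rw [hx₀eq]
      linear_combination (-(p * r⁻¹ * r')) * h2
  -- construct the isometry
  have hinj : Function.Injective (QuadraticMap.weightedSumSquares F (pfC c)) :=
    PaperAux.qws_inj _ hθaniso
  have hsub : ∀ y, ∃ z, QuadraticMap.weightedSumSquares F (pfC c) z
      = QuadraticMap.weightedSumSquares F (pfC (Fin.cons β e)) y :=
    fun y => (key _).mp ⟨y, rfl⟩
  choose f hf using hsub
  have hmap_add : ∀ y z, f (y + z) = f y + f z := by
    intro y z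
    apply hinj
    rw [PaperAux.qws_add, hf, hf, hf, PaperAux.qws_add]
  have hmap_smul : ∀ (a : F) y, f (a • y) = a • f y := by
    intro a y
    apply hinj
    rw [hf, QuadraticMap.map_smul, QuadraticMap.map_smul, hf]
  let fL : ((Fin (k + 1) → Bool) → F) →ₗ[F] ((Fin (k + 1) → Bool) → F) :=
    { toFun := f, map_add' := hmap_add, map_smul' := hmap_smul }
  have hfL : ∀ y, QuadraticMap.weightedSumSquares F (pfC c) (fL y)
      = QuadraticMap.weightedSumSquares F (pfC (Fin.cons β e)) y := hf
  have hsurj : Function.Surjective fL := by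
    intro z
    obtain ⟨y, hy⟩ := (key _).mpr ⟨z, rfl⟩
    exact ⟨y, hinj (by rw [hfL]; exact hy)⟩
  have hbij : Function.Bijective fL := ⟨LinearMap.injective_iff_surjective.mpr hsurj, hsurj⟩
  let EE := LinearEquiv.ofBijective fL hbij
  refine ⟨QuadraticMap.IsometryEquiv.mk EE.symm ?_⟩
  intro m
  show QuadraticMap.weightedSumSquares F (pfC (Fin.cons β e)) (EE.symm m)
      = QuadraticMap.weightedSumSquares F (pfC c) m
  rw [← hfL (EE.symm m)]
  congr 1
  show fL (EE.symm m) = m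
  exact EE.apply_symm_apply m
end
end
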